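/- The Mina margin map M(x) = lim_{k→∞} M_{k,k}(x) is continuous on (0,∞), and for every x ∈ (0,∞) the limits P_∞(x) = lim_k P_k(x), Q_∞(x) = lim_k Q_k(x), S_∞(x) = lim_k S_k(x) and T_∞(x) = lim_k T_k(x) exist as finite positive reals and M(x) = x·(S_∞(x) + T_∞(x))/(P_∞(x) + Q_∞(x)). -/

import Mathlib

/-- `ω(x) = √(8x+1)`. -/
noncomputable def wF (x : ℝ) : ℝ := Real.sqrt (8 * x + 1)

/-- `c(x) = (ω+3)²/16`. -/
noncomputable def cF (x : ℝ) : ℝ := (wF x + 3) ^ 2 / 16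

/-- `d(x) = (ω+3)²/(8(ω+1))`. -/
noncomputable def dF (x : ℝ) : ℝ := (wF x + 3) ^ 2 / (8 * (wF x + 1))

/-- `s(x) = (ω−1)²/(4(ω+7))`. -/
noncomputable def sF (x : ℝ) : ℝ := (wF x - 1) ^ 2 / (4 * (wF x + 7))

/-- `s₋₁(x) = 1/s(1/x)`, the inverse of `s`. -/
noncomputable def sFinv (x : ℝ) : ℝ := 1 / sF (1 / x)

/-- The ℤ-indexed iterates of `s`. -/
noncomputable def sIter (k : ℤ) (x : ℝ) : ℝ :=
  if 0 ≤ k then sF^[k.toNat] x else sFinv^[(-k).toNat] x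

/-- `P₀ = 1` and `P_{k+1} − P_k = ∏_{i=0}^{k} (c_i(x) − 1)`. -/
noncomputable def Pfun (x : ℝ) : ℕ → ℝ
  | 0 => 1
  | k + 1 => Pfun x k + ∏ i ∈ Finset.range (k + 1), (cF (sIter i x) - 1)

/-- `S₀ = 1` and `S_{k+1} − S_k = ∏_{i=0}^{k} (d_i(x) − 1)`. -/
noncomputable def Sfun (x : ℝ) : ℕ → ℝ
  | 0 => 1
  | k + 1 => Sfun x k + ∏ i ∈ Finset.range (k + 1), (dF (sIter i x) - 1)

/-- `Q₁ = 0` and `Q_{k+1} − Q_k = ∏_{i=1}^{k} (c_{−i}(x) − 1)⁻¹` for `k ≥ 1`. -/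
noncomputable def Qfun (x : ℝ) : ℕ → ℝ
  | 0 => 0
  | 1 => 0
  | k + 2 => Qfun x (k + 1) + ∏ i ∈ Finset.range (k + 1), (cF (sIter (-((i : ℤ) + 1)) x) - 1)⁻¹

/-- `T₁ = 0` and `T_{k+1} − T_k = ∏_{i=1}^{k} (d_{−i}(x) − 1)⁻¹` for `k ≥ 1`. -/
noncomputable def Tfun (x : ℝ) : ℕ → ℝ
  | 0 => 0
  | 1 => 0
  | k + 2 => Tfun x (k + 1) + ∏ i ∈ Finset.range (k + 1), (dF (sIter (-((i : ℤ) + 1)) x) - 1)⁻¹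

/-- The finite-trail Mina margin map `M_{ℓ,k}(x) = x(S_k + T_ℓ)/(P_k + Q_ℓ)`. -/
noncomputable def Mfin (l k : ℕ) (x : ℝ) : ℝ :=
  x * (Sfun x k + Tfun x l) / (Pfun x k + Qfun x l)

/- ## Basic lemmas -/

lemma wF_nonneg (x : ℝ) : 0 ≤ wF x := Real.sqrt_nonneg _

@[fun_prop] lemma continuous_wF : Continuous wF := by
  unfold wF; fun_prop

lemma wF_sq {x : ℝ} (hx : 0 ≤ x) : wF x ^ 2 = 8 * x + 1 :=
  Real.sq_sqrt (by linarith)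

lemma one_le_wF {x : ℝ} (hx : 0 ≤ x) : 1 ≤ wF x := by
  have : (1:ℝ) = Real.sqrt 1 := (Real.sqrt_one).symm
  rw [this]; exact Real.sqrt_le_sqrt (by linarith)

lemma one_lt_wF {x : ℝ} (hx : 0 < x) : 1 < wF x := by
  have h := wF_sq hx.le
  nlinarith [wF_nonneg x]

lemma wF_le {x : ℝ} (hx : 0 ≤ x) : wF x ≤ 1 + 4 * x := by
  have : wF x ≤ Real.sqrt ((1 + 4*x)^2) := Real.sqrt_le_sqrt (by nlinarith)
  rwa [Real.sqrt_sq (by linarith)] at this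

lemma sF_pos {x : ℝ} (hx : 0 < x) : 0 < sF x := by
  have h1 := one_lt_wF hx
  exact div_pos (by nlinarith) (by linarith)

lemma sF_le {x : ℝ} (hx : 0 < x) : sF x ≤ x / 8 := by
  have h1 := one_lt_wF hx
  have h2 := wF_sq hx.le
  rw [sF, div_le_div_iff₀ (by linarith) (by norm_num)]
  nlinarith [sq_nonneg (wF x - 4), sq_nonneg (wF x - 1)]

lemma cF_sub_one_pos {x : ℝ} (hx : 0 < x) : 0 < cF x - 1 := by
  have h1 := one_lt_wF hx
  have : cF x - 1 = ((wF x + 3)^2 - 16) / 16 := by rw [cF]; ring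
  rw [this]; apply div_pos _ (by norm_num); nlinarith

lemma cF_sub_one_le {x : ℝ} (hx : 0 < x) : cF x - 1 ≤ 2 * x := by
  have h1 := one_lt_wF hx
  have h2 := wF_sq hx.le
  have h3 := wF_le hx.le
  have : cF x - 1 = ((wF x + 3)^2 - 16) / 16 := by rw [cF]; ring
  rw [this]; rw [div_le_iff₀ (by norm_num)]; nlinarith

lemma cF_sub_one_ge {x : ℝ} (hx : 0 < x) : x / 2 ≤ cF x - 1 := by
  have h1 := one_lt_wF hx
  have h2 := wF_sq hx.le
  have : cF x - 1 = ((wF x + 3)^2 - 16) / 16 := by rw [cF]; ring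
  rw [this]; rw [le_div_iff₀ (by norm_num)]; nlinarith

lemma dF_sub_one_pos {x : ℝ} (hx : 0 < x) : 0 < dF x - 1 := by
  have h1 := one_lt_wF hx
  have : dF x - 1 = (wF x - 1)^2 / (8 * (wF x + 1)) := by
    rw [dF]; field_simp; ring
  rw [this]; exact div_pos (by nlinarith) (by linarith)

lemma dF_sub_one_le_cF {x : ℝ} (hx : 0 < x) : dF x - 1 ≤ cF x - 1 := by
  have h1 := one_lt_wF hx
  have hd : dF x - 1 = (wF x - 1)^2 / (8 * (wF x + 1)) := by
    rw [dF]; field_simp; ring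
  have hc : cF x - 1 = ((wF x + 3)^2 - 16) / 16 := by rw [cF]; ring
  rw [hd, hc, div_le_div_iff₀ (by linarith) (by norm_num)]
  nlinarith [sq_nonneg (wF x - 1), sq_nonneg (wF x + 1)]

lemma dF_mono {x y : ℝ} (hx : 0 ≤ x) (hxy : x ≤ y) : dF x ≤ dF y := by
  have hu := one_le_wF hx
  have huv : wF x ≤ wF y := Real.sqrt_le_sqrt (by linarith)
  rw [dF, dF, div_le_div_iff₀ (by linarith) (by linarith)]
  nlinarith [mul_nonneg (sub_nonneg.2 huv) (by nlinarith : (0:ℝ) ≤ wF x * wF y + wF x + wF y - 3)]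

lemma dF_sub_one_ge_two {x : ℝ} (hx : 45 ≤ x) : 2 ≤ dF x - 1 := by
  have h2 := wF_sq (by linarith : (0:ℝ) ≤ x)
  have h19 : 19 ≤ wF x := by
    have : (19:ℝ) = Real.sqrt 361 := by
      rw [show (361:ℝ) = 19^2 by norm_num, Real.sqrt_sq]; norm_num
    rw [this]; exact Real.sqrt_le_sqrt (by linarith)
  have hd : dF x - 1 = (wF x - 1)^2 / (8 * (wF x + 1)) := by
    rw [dF]; field_simp; ring
  rw [hd, le_div_iff₀ (by linarith)]
  nlinarith

/- ## Iterates -/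

lemma sFinv_pos {x : ℝ} (hx : 0 < x) : 0 < sFinv x :=
  div_pos one_pos (sF_pos (by positivity))

lemma sFinv_ge {x : ℝ} (hx : 0 < x) : 8 * x ≤ sFinv x := by
  have h1 : (0:ℝ) < 1/x := by positivity
  have h2 := sF_pos h1
  have h3 := sF_le h1
  rw [sFinv, le_div_iff₀ h2]
  calc 8 * x * sF (1/x) ≤ 8 * x * ((1/x)/8) := by
        apply mul_le_mul_of_nonneg_left h3; positivity
    _ = 1 := by field_simp

lemma sF_iter_pos {x : ℝ} (hx : 0 < x) (n : ℕ) : 0 < sF^[n] x := by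
  induction n with
  | zero => simpa
  | succ n ih => rw [Function.iterate_succ_apply']; exact sF_pos ih

lemma sF_iter_le {x : ℝ} (hx : 0 < x) (n : ℕ) : sF^[n] x ≤ x / 8 ^ n := by
  induction n with
  | zero => simp
  | succ n ih =>
    rw [Function.iterate_succ_apply']
    calc sF (sF^[n] x) ≤ sF^[n] x / 8 := sF_le (sF_iter_pos hx n)
      _ ≤ (x / 8^n) / 8 := by linarith
      _ = x / 8^(n+1) := by rw [pow_succ]; ring

lemma sFinv_iter_pos {x : ℝ} (hx : 0 < x) (n : ℕ) : 0 < sFinv^[n] x := by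
  induction n with
  | zero => simpa
  | succ n ih => rw [Function.iterate_succ_apply']; exact sFinv_pos ih

lemma sFinv_iter_ge {x : ℝ} (hx : 0 < x) (n : ℕ) : 8 ^ n * x ≤ sFinv^[n] x := by
  induction n with
  | zero => simp
  | succ n ih =>
    rw [Function.iterate_succ_apply']
    calc (8:ℝ)^(n+1) * x = 8 * (8^n * x) := by rw [pow_succ]; ring
      _ ≤ 8 * sFinv^[n] x := by linarith
      _ ≤ sFinv (sFinv^[n] x) := sFinv_ge (sFinv_iter_pos hx n)

lemma sIter_natCast (i : ℕ) (x : ℝ) : sIter (i : ℤ) x = sF^[i] x := by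
  simp [sIter]

lemma sIter_neg (i : ℕ) (x : ℝ) : sIter (-((i:ℤ) + 1)) x = sFinv^[i+1] x := by
  rw [sIter, if_neg (by omega)]
  congr 1

@[fun_prop] lemma continuous_cF : Continuous cF := by
  unfold cF; fun_prop

@[fun_prop] lemma continuous_dF : Continuous dF := by
  unfold dF
  apply Continuous.div (by fun_prop) (by fun_prop)
  intro x; have := wF_nonneg x; positivity

@[fun_prop] lemma continuous_sF : Continuous sF := by
  unfold sF
  apply Continuous.div (by fun_prop) (by fun_prop)
  intro x; have := wF_nonneg x; positivity

lemma continuousOn_sFinv : ContinuousOn sFinv (Set.Ioi 0) := by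
  unfold sFinv
  apply ContinuousOn.div continuousOn_const
  · exact continuous_sF.comp_continuousOn
      (ContinuousOn.div continuousOn_const continuousOn_id (fun x hx => ne_of_gt hx))
  · intro x hx
    exact ne_of_gt (sF_pos (by have : (0:ℝ) < x := hx; positivity))

lemma continuousOn_sFinv_iter (n : ℕ) : ContinuousOn (sFinv^[n]) (Set.Ioi 0) := by
  induction n with
  | zero => simpa using continuousOn_id
  | succ n ih =>
    rw [Function.iterate_succ']
    exact continuousOn_sFinv.comp ih (fun x hx => sFinv_iter_pos hx n)

/- ## Series terms -/

noncomputable def aP (x : ℝ) (k : ℕ) : ℝ :=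
  ∏ i ∈ Finset.range (k + 1), (cF (sIter i x) - 1)
noncomputable def aS (x : ℝ) (k : ℕ) : ℝ :=
  ∏ i ∈ Finset.range (k + 1), (dF (sIter i x) - 1)
noncomputable def bQ (x : ℝ) (k : ℕ) : ℝ :=
  ∏ i ∈ Finset.range (k + 1), (cF (sIter (-((i : ℤ) + 1)) x) - 1)⁻¹
noncomputable def bT (x : ℝ) (k : ℕ) : ℝ :=
  ∏ i ∈ Finset.range (k + 1), (dF (sIter (-((i : ℤ) + 1)) x) - 1)⁻¹

noncomputable def uB (b : ℝ) (k : ℕ) : ℝ := ∏ i ∈ Finset.range (k + 1), (2 * b / 8 ^ i)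
noncomputable def vQB (a : ℝ) (k : ℕ) : ℝ := ∏ i ∈ Finset.range (k + 1), (8 ^ (i+1) * a / 2)⁻¹
noncomputable def vTB (a : ℝ) (k : ℕ) : ℝ := ∏ i ∈ Finset.range (k + 1), (dF (8 ^ (i+1) * a) - 1)⁻¹

lemma Pfun_eq (x : ℝ) (n : ℕ) : Pfun x n = 1 + ∑ k ∈ Finset.range n, aP x k := by
  induction n with
  | zero => simp [Pfun]
  | succ n ih => rw [Pfun, ih, Finset.sum_range_succ]; rw [aP]; ring

lemma Sfun_eq (x : ℝ) (n : ℕ) : Sfun x n = 1 + ∑ k ∈ Finset.range n, aS x k := by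
  induction n with
  | zero => simp [Sfun]
  | succ n ih => rw [Sfun, ih, Finset.sum_range_succ]; rw [aS]; ring

lemma Qfun_eq (x : ℝ) (n : ℕ) : Qfun x (n + 1) = ∑ k ∈ Finset.range n, bQ x k := by
  induction n with
  | zero => simp [Qfun]
  | succ n ih => rw [Qfun, ih, Finset.sum_range_succ]; rw [bQ]

lemma Tfun_eq (x : ℝ) (n : ℕ) : Tfun x (n + 1) = ∑ k ∈ Finset.range n, bT x k := by
  induction n with
  | zero => simp [Tfun]
  | succ n ih => rw [Tfun, ih, Finset.sum_range_succ]; rw [bT]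

/- ## Term bounds -/

lemma aP_pos {x : ℝ} (hx : 0 < x) (k : ℕ) : 0 < aP x k :=
  Finset.prod_pos fun i _ => by
    rw [sIter_natCast]; exact cF_sub_one_pos (sF_iter_pos hx i)

lemma aS_pos {x : ℝ} (hx : 0 < x) (k : ℕ) : 0 < aS x k :=
  Finset.prod_pos fun i _ => by
    rw [sIter_natCast]; exact dF_sub_one_pos (sF_iter_pos hx i)

lemma bQ_pos {x : ℝ} (hx : 0 < x) (k : ℕ) : 0 < bQ x k :=
  Finset.prod_pos fun i _ => by
    rw [sIter_neg]; exact inv_pos.2 (cF_sub_one_pos (sFinv_iter_pos hx (i+1)))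

lemma bT_pos {x : ℝ} (hx : 0 < x) (k : ℕ) : 0 < bT x k :=
  Finset.prod_pos fun i _ => by
    rw [sIter_neg]; exact inv_pos.2 (dF_sub_one_pos (sFinv_iter_pos hx (i+1)))

lemma aP_le {x b : ℝ} (hx : 0 < x) (hb : x ≤ b) (k : ℕ) : aP x k ≤ uB b k := by
  apply Finset.prod_le_prod
  · intro i _; rw [sIter_natCast]; exact (cF_sub_one_pos (sF_iter_pos hx i)).le
  · intro i _
    rw [sIter_natCast]
    calc cF (sF^[i] x) - 1 ≤ 2 * sF^[i] x := cF_sub_one_le (sF_iter_pos hx i)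
      _ ≤ 2 * (x / 8 ^ i) := by
          have := sF_iter_le hx i; linarith
      _ ≤ 2 * b / 8 ^ i := by
          rw [mul_div_assoc]
          gcongr

lemma aS_le {x b : ℝ} (hx : 0 < x) (hb : x ≤ b) (k : ℕ) : aS x k ≤ uB b k := by
  apply Finset.prod_le_prod
  · intro i _; rw [sIter_natCast]; exact (dF_sub_one_pos (sF_iter_pos hx i)).le
  · intro i _
    rw [sIter_natCast]
    have h1 : dF (sF^[i] x) - 1 ≤ cF (sF^[i] x) - 1 := dF_sub_one_le_cF (sF_iter_pos hx i)
    have h2 := cF_sub_one_le (sF_iter_pos hx i)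
    have h3 := sF_iter_le hx i
    have h8 : (0:ℝ) < 8 ^ i := by positivity
    calc dF (sF^[i] x) - 1 ≤ 2 * (x / 8 ^ i) := by linarith
      _ ≤ 2 * b / 8 ^ i := by
          rw [mul_div_assoc]
          gcongr

lemma bQ_le {x a : ℝ} (ha : 0 < a) (hax : a ≤ x) (k : ℕ) : bQ x k ≤ vQB a k := by
  have hx : 0 < x := lt_of_lt_of_le ha hax
  apply Finset.prod_le_prod
  · intro i _; rw [sIter_neg]
    exact (inv_pos.2 (cF_sub_one_pos (sFinv_iter_pos hx (i+1)))).le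
  · intro i _
    rw [sIter_neg]
    have hpos := sFinv_iter_pos hx (i+1)
    have hge : 8 ^ (i+1) * a ≤ sFinv^[i+1] x :=
      le_trans (by nlinarith [pow_pos (show (0:ℝ) < 8 by norm_num) (i+1)]) (sFinv_iter_ge hx (i+1))
    apply inv_anti₀ (by positivity)
    calc (8:ℝ) ^ (i+1) * a / 2 ≤ sFinv^[i+1] x / 2 := by linarith
      _ ≤ cF (sFinv^[i+1] x) - 1 := cF_sub_one_ge hpos

lemma bT_le {x a : ℝ} (ha : 0 < a) (hax : a ≤ x) (k : ℕ) : bT x k ≤ vTB a k := by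
  have hx : 0 < x := lt_of_lt_of_le ha hax
  apply Finset.prod_le_prod
  · intro i _; rw [sIter_neg]
    exact (inv_pos.2 (dF_sub_one_pos (sFinv_iter_pos hx (i+1)))).le
  · intro i _
    rw [sIter_neg]
    have hpos := sFinv_iter_pos hx (i+1)
    have hge : 8 ^ (i+1) * a ≤ sFinv^[i+1] x :=
      le_trans (by nlinarith [pow_pos (show (0:ℝ) < 8 by norm_num) (i+1)]) (sFinv_iter_ge hx (i+1))
    apply inv_anti₀ (dF_sub_one_pos (by positivity))
    have := dF_mono (show (0:ℝ) ≤ 8 ^ (i+1) * a by positivity) hge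
    linarith

/- ## Summability of the bounding sequences -/

lemma pow8_eventually_ge (C : ℝ) : ∀ᶠ n : ℕ in Filter.atTop, C ≤ 8 ^ n :=
  (tendsto_pow_atTop_atTop_of_one_lt (show (1:ℝ) < 8 by norm_num)).eventually_ge_atTop C

lemma summable_of_ratio_aux {u r : ℕ → ℝ} (hu : ∀ n, 0 ≤ u n)
    (hrec : ∀ n, u (n + 1) = u n * r n) (hr0 : ∀ n, 0 ≤ r n)
    (hr : ∀ᶠ n in Filter.atTop, r n ≤ 1 / 2) : Summable u := by
  apply summable_of_ratio_norm_eventually_le (show (1:ℝ)/2 < 1 by norm_num)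
  filter_upwards [hr] with n hn
  rw [Real.norm_eq_abs, Real.norm_eq_abs, abs_of_nonneg (hu _), abs_of_nonneg (hu _), hrec]
  calc u n * r n ≤ u n * (1/2) := mul_le_mul_of_nonneg_left hn (hu n)
    _ = 1/2 * u n := by ring

lemma uB_pos {b : ℝ} (hb : 0 < b) (k : ℕ) : 0 < uB b k :=
  Finset.prod_pos fun i _ => by positivity

lemma summable_uB {b : ℝ} (hb : 0 < b) : Summable (uB b) := by
  apply summable_of_ratio_aux (r := fun n => 2 * b / 8 ^ (n+1))
    (fun n => (uB_pos hb n).le)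
    (fun n => by rw [uB, uB, Finset.prod_range_succ])
    (fun n => by positivity)
  filter_upwards [pow8_eventually_ge (4 * b)] with n hn
  have h : (8:ℝ)^n ≤ 8^(n+1) := pow_le_pow_right₀ (by norm_num) (by omega)
  rw [div_le_div_iff₀ (by positivity) (by norm_num)]
  nlinarith

lemma vQB_pos {a : ℝ} (ha : 0 < a) (k : ℕ) : 0 < vQB a k :=
  Finset.prod_pos fun i _ => by positivity

lemma summable_vQB {a : ℝ} (ha : 0 < a) : Summable (vQB a) := by
  apply summable_of_ratio_aux (r := fun n => (8 ^ (n+2) * a / 2)⁻¹)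
    (fun n => (vQB_pos ha n).le)
    (fun n => by rw [vQB, vQB, Finset.prod_range_succ])
    (fun n => by positivity)
  filter_upwards [pow8_eventually_ge (4 / a)] with n hn
  have h8 : (8:ℝ)^n ≤ 8^(n+2) := pow_le_pow_right₀ (by norm_num) (by omega)
  have h4 : (4:ℝ) ≤ 8^(n+2)*a := by
    rw [div_le_iff₀ ha] at hn; nlinarith
  rw [inv_le_comm₀ (by positivity) (by norm_num)]
  norm_num
  linarith

lemma vTB_pos {a : ℝ} (ha : 0 < a) (k : ℕ) : 0 < vTB a k :=
  Finset.prod_pos fun i _ => inv_pos.2 (dF_sub_one_pos (by positivity))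

lemma summable_vTB {a : ℝ} (ha : 0 < a) : Summable (vTB a) := by
  apply summable_of_ratio_aux (r := fun n => (dF (8 ^ (n+2) * a) - 1)⁻¹)
    (fun n => (vTB_pos ha n).le)
    (fun n => by rw [vTB, vTB, Finset.prod_range_succ])
    (fun n => (inv_pos.2 (dF_sub_one_pos (by positivity))).le)
  filter_upwards [pow8_eventually_ge (45 / a)] with n hn
  have h45 : (45:ℝ) ≤ 8 ^ (n+2) * a := by
    rw [div_le_iff₀ ha] at hn
    calc (45:ℝ) ≤ 8 ^ n * a := hn
      _ ≤ 8 ^ (n+2) * a := by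
          apply mul_le_mul_of_nonneg_right _ ha.le
          exact pow_le_pow_right₀ (by norm_num) (by omega)
  have := dF_sub_one_ge_two h45
  rw [inv_le_comm₀ (by linarith) (by norm_num)]
  linarith

/- ## Pointwise summability and limits -/

noncomputable def Pinf (x : ℝ) : ℝ := 1 + ∑' k, aP x k
noncomputable def Sinf (x : ℝ) : ℝ := 1 + ∑' k, aS x k
noncomputable def Qinf (x : ℝ) : ℝ := ∑' k, bQ x k
noncomputable def Tinf (x : ℝ) : ℝ := ∑' k, bT x k
noncomputable def Mmap (x : ℝ) : ℝ := x * (Sinf x + Tinf x) / (Pinf x + Qinf x)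

lemma summable_aP {x : ℝ} (hx : 0 < x) : Summable (aP x) :=
  Summable.of_nonneg_of_le (fun k => (aP_pos hx k).le) (aP_le hx le_rfl) (summable_uB hx)

lemma summable_aS {x : ℝ} (hx : 0 < x) : Summable (aS x) :=
  Summable.of_nonneg_of_le (fun k => (aS_pos hx k).le) (aS_le hx le_rfl) (summable_uB hx)

lemma summable_bQ {x : ℝ} (hx : 0 < x) : Summable (bQ x) :=
  Summable.of_nonneg_of_le (fun k => (bQ_pos hx k).le) (bQ_le hx le_rfl) (summable_vQB hx)

lemma summable_bT {x : ℝ} (hx : 0 < x) : Summable (bT x) :=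
  Summable.of_nonneg_of_le (fun k => (bT_pos hx k).le) (bT_le hx le_rfl) (summable_vTB hx)

lemma tendsto_Pfun {x : ℝ} (hx : 0 < x) :
    Filter.Tendsto (Pfun x) Filter.atTop (nhds (Pinf x)) := by
  have h := (summable_aP hx).hasSum.tendsto_sum_nat
  have h2 := (tendsto_const_nhds (x := (1:ℝ)) (f := Filter.atTop (α := ℕ))).add h
  simpa only [← Pfun_eq, Pinf] using h2

lemma tendsto_Sfun {x : ℝ} (hx : 0 < x) :
    Filter.Tendsto (Sfun x) Filter.atTop (nhds (Sinf x)) := by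
  have h := (summable_aS hx).hasSum.tendsto_sum_nat
  have h2 := (tendsto_const_nhds (x := (1:ℝ)) (f := Filter.atTop (α := ℕ))).add h
  simpa only [← Sfun_eq, Sinf] using h2

lemma tendsto_Qfun {x : ℝ} (hx : 0 < x) :
    Filter.Tendsto (Qfun x) Filter.atTop (nhds (Qinf x)) := by
  have h := (summable_bQ hx).hasSum.tendsto_sum_nat
  have h2 : Filter.Tendsto (fun n => Qfun x (n + 1)) Filter.atTop (nhds (Qinf x)) := by
    simpa only [← Qfun_eq, Qinf] using h
  exact (Filter.tendsto_add_atTop_iff_nat 1).mp h2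

lemma tendsto_Tfun {x : ℝ} (hx : 0 < x) :
    Filter.Tendsto (Tfun x) Filter.atTop (nhds (Tinf x)) := by
  have h := (summable_bT hx).hasSum.tendsto_sum_nat
  have h2 : Filter.Tendsto (fun n => Tfun x (n + 1)) Filter.atTop (nhds (Tinf x)) := by
    simpa only [← Tfun_eq, Tinf] using h
  exact (Filter.tendsto_add_atTop_iff_nat 1).mp h2

lemma Pinf_ge_one {x : ℝ} (hx : 0 < x) : 1 ≤ Pinf x := by
  have : 0 ≤ ∑' k, aP x k := tsum_nonneg (fun k => (aP_pos hx k).le)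
  rw [Pinf]; linarith

lemma Sinf_ge_one {x : ℝ} (hx : 0 < x) : 1 ≤ Sinf x := by
  have : 0 ≤ ∑' k, aS x k := tsum_nonneg (fun k => (aS_pos hx k).le)
  rw [Sinf]; linarith

lemma Qinf_pos {x : ℝ} (hx : 0 < x) : 0 < Qinf x :=
  Summable.tsum_pos (summable_bQ hx) (fun k => (bQ_pos hx k).le) 0 (bQ_pos hx 0)

lemma Tinf_pos {x : ℝ} (hx : 0 < x) : 0 < Tinf x :=
  Summable.tsum_pos (summable_bT hx) (fun k => (bT_pos hx k).le) 0 (bT_pos hx 0)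

lemma denom_pos {x : ℝ} (hx : 0 < x) : 0 < Pinf x + Qinf x := by
  have := Pinf_ge_one hx; have := Qinf_pos hx; linarith

/- ## Continuity of the limits -/

lemma continuousAt_tsum_aP {x : ℝ} (hx : 0 < x) :
    ContinuousAt (fun y => ∑' k, aP y k) x := by
  have ha : (0:ℝ) < x/2 := by linarith
  have hco : ContinuousOn (fun y => ∑' k, aP y k) (Set.Icc (x/2) (x+1)) := by
    apply continuousOn_tsum (u := uB (x+1))
    · intro k
      apply continuousOn_finset_prod
      intro i _
      have : (fun y : ℝ => cF (sIter (i : ℤ) y) - 1) = fun y => cF (sF^[i] y) - 1 := by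
        funext y; rw [sIter_natCast]
      rw [this]
      exact ((continuous_cF.comp (continuous_sF.iterate i)).sub continuous_const).continuousOn
    · exact summable_uB (by linarith)
    · intro k y hy
      have hy0 : 0 < y := lt_of_lt_of_le ha hy.1
      rw [Real.norm_eq_abs, abs_of_pos (aP_pos hy0 k)]
      exact aP_le hy0 hy.2 k
  exact hco.continuousAt (Icc_mem_nhds (by linarith) (by linarith))

lemma continuousAt_tsum_aS {x : ℝ} (hx : 0 < x) :
    ContinuousAt (fun y => ∑' k, aS y k) x := by
  have ha : (0:ℝ) < x/2 := by linarith
  have hco : ContinuousOn (fun y => ∑' k, aS y k) (Set.Icc (x/2) (x+1)) := by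
    apply continuousOn_tsum (u := uB (x+1))
    · intro k
      apply continuousOn_finset_prod
      intro i _
      have : (fun y : ℝ => dF (sIter (i : ℤ) y) - 1) = fun y => dF (sF^[i] y) - 1 := by
        funext y; rw [sIter_natCast]
      rw [this]
      exact ((continuous_dF.comp (continuous_sF.iterate i)).sub continuous_const).continuousOn
    · exact summable_uB (by linarith)
    · intro k y hy
      have hy0 : 0 < y := lt_of_lt_of_le ha hy.1
      rw [Real.norm_eq_abs, abs_of_pos (aS_pos hy0 k)]
      exact aS_le hy0 hy.2 k
  exact hco.continuousAt (Icc_mem_nhds (by linarith) (by linarith))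

lemma continuousAt_tsum_bQ {x : ℝ} (hx : 0 < x) :
    ContinuousAt (fun y => ∑' k, bQ y k) x := by
  have ha : (0:ℝ) < x/2 := by linarith
  have hsub : Set.Icc (x/2) (x+1) ⊆ Set.Ioi 0 := fun y hy => lt_of_lt_of_le ha hy.1
  have hco : ContinuousOn (fun y => ∑' k, bQ y k) (Set.Icc (x/2) (x+1)) := by
    apply continuousOn_tsum (u := vQB (x/2))
    · intro k
      apply continuousOn_finset_prod
      intro i _
      have : (fun y : ℝ => (cF (sIter (-((i:ℤ) + 1)) y) - 1)⁻¹)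
          = fun y => (cF (sFinv^[i+1] y) - 1)⁻¹ := by
        funext y; rw [sIter_neg]
      rw [this]
      apply ContinuousOn.inv₀
      · exact (continuous_cF.comp_continuousOn
          ((continuousOn_sFinv_iter (i+1)).mono hsub)).sub continuousOn_const
      · intro y hy
        exact ne_of_gt (cF_sub_one_pos (sFinv_iter_pos (hsub hy) (i+1)))
    · exact summable_vQB ha
    · intro k y hy
      have hy0 : 0 < y := hsub hy
      rw [Real.norm_eq_abs, abs_of_pos (bQ_pos hy0 k)]
      exact bQ_le ha hy.1 k
  exact hco.continuousAt (Icc_mem_nhds (by linarith) (by linarith))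

lemma continuousAt_tsum_bT {x : ℝ} (hx : 0 < x) :
    ContinuousAt (fun y => ∑' k, bT y k) x := by
  have ha : (0:ℝ) < x/2 := by linarith
  have hsub : Set.Icc (x/2) (x+1) ⊆ Set.Ioi 0 := fun y hy => lt_of_lt_of_le ha hy.1
  have hco : ContinuousOn (fun y => ∑' k, bT y k) (Set.Icc (x/2) (x+1)) := by
    apply continuousOn_tsum (u := vTB (x/2))
    · intro k
      apply continuousOn_finset_prod
      intro i _
      have : (fun y : ℝ => (dF (sIter (-((i:ℤ) + 1)) y) - 1)⁻¹)
          = fun y => (dF (sFinv^[i+1] y) - 1)⁻¹ := by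
        funext y; rw [sIter_neg]
      rw [this]
      apply ContinuousOn.inv₀
      · exact (continuous_dF.comp_continuousOn
          ((continuousOn_sFinv_iter (i+1)).mono hsub)).sub continuousOn_const
      · intro y hy
        exact ne_of_gt (dF_sub_one_pos (sFinv_iter_pos (hsub hy) (i+1)))
    · exact summable_vTB ha
    · intro k y hy
      have hy0 : 0 < y := hsub hy
      rw [Real.norm_eq_abs, abs_of_pos (bT_pos hy0 k)]
      exact bT_le ha hy.1 k
  exact hco.continuousAt (Icc_mem_nhds (by linarith) (by linarith))

lemma continuousOn_Mmap : ContinuousOn Mmap (Set.Ioi 0) := by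
  have hP : ContinuousOn Pinf (Set.Ioi 0) := fun x hx =>
    ((continuousAt_const.add (continuousAt_tsum_aP hx)).continuousWithinAt)
  have hS : ContinuousOn Sinf (Set.Ioi 0) := fun x hx =>
    ((continuousAt_const.add (continuousAt_tsum_aS hx)).continuousWithinAt)
  have hQ : ContinuousOn Qinf (Set.Ioi 0) := fun x hx =>
    ((continuousAt_tsum_bQ hx).continuousWithinAt)
  have hT : ContinuousOn Tinf (Set.Ioi 0) := fun x hx =>
    ((continuousAt_tsum_bT hx).continuousWithinAt)
  exact ((continuousOn_id.mul (hS.add hT)).div (hP.add hQ))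
    (fun x hx => ne_of_gt (denom_pos hx))

/-- The Mina margin map `M(x) = lim_k M_{k,k}(x)` is continuous on `(0,∞)`; moreover for
every `x > 0` the four limits `P_∞(x), Q_∞(x), S_∞(x), T_∞(x)` exist as finite positive
reals and `M(x) = x(S_∞(x) + T_∞(x))/(P_∞(x) + Q_∞(x))`. -/
theorem mina_margin_continuous_formula :
    ∃ M : ℝ → ℝ,
      (∀ x : ℝ, 0 < x →
        Filter.Tendsto (fun k : ℕ => Mfin k k x) Filter.atTop (nhds (M x))) ∧
      ContinuousOn M (Set.Ioi 0) ∧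
      ∀ x : ℝ, 0 < x →
        ∃ Pi Qi Si Ti : ℝ, 0 < Pi ∧ 0 < Qi ∧ 0 < Si ∧ 0 < Ti ∧
          Filter.Tendsto (Pfun x) Filter.atTop (nhds Pi) ∧
          Filter.Tendsto (Qfun x) Filter.atTop (nhds Qi) ∧
          Filter.Tendsto (Sfun x) Filter.atTop (nhds Si) ∧
          Filter.Tendsto (Tfun x) Filter.atTop (nhds Ti) ∧
          M x = x * (Si + Ti) / (Pi + Qi) := by
  refine ⟨Mmap, ?_, continuousOn_Mmap, ?_⟩
  · intro x hx
    have hnum : Filter.Tendsto (fun k : ℕ => x * (Sfun x k + Tfun x k)) Filter.atTop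
        (nhds (x * (Sinf x + Tinf x))) :=
      tendsto_const_nhds.mul ((tendsto_Sfun hx).add (tendsto_Tfun hx))
    have hden : Filter.Tendsto (fun k : ℕ => Pfun x k + Qfun x k) Filter.atTop
        (nhds (Pinf x + Qinf x)) := (tendsto_Pfun hx).add (tendsto_Qfun hx)
    have := hnum.div hden (ne_of_gt (denom_pos hx))
    simpa [Mfin, Mmap, div_eq_mul_inv, Pi.mul_def, Pi.inv_def] using this
  · intro x hx
    exact ⟨Pinf x, Qinf x, Sinf x, Tinf x,
      lt_of_lt_of_le one_pos (Pinf_ge_one hx), Qinf_pos hx,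
      lt_of_lt_of_le one_pos (Sinf_ge_one hx), Tinf_pos hx,
      tendsto_Pfun hx, tendsto_Qfun hx, tendsto_Sfun hx, tendsto_Tfun hx, rfl⟩
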